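/- Let (H,R) be a quasitriangular Hopf algebra, A a quantum commutative Yetter–Drinfeld module algebra (ab = (a₍₋₁₎·b)a₍₀₎ for all a,b ∈ A), and Z a Yetter–Drinfeld module. If c⊗z ∈ A⊗Z satisfies the cotensor condition Σ R²·c₍₀₎ ⊗ R¹c₍₋₁₎ ⊗ z = Σ c ⊗ z₍₋₁₎S(R²) ⊗ R¹·z₍₀₎, then (1⊗ā)•(c⊗z) = ac ⊗ z for all a ∈ A, where • is the Aᵉ-action (a⊗b̄)•(c⊗z) = Σ a(R²·c)(r²S⁻¹(z₍₋₁₎)R¹·b) ⊗ r¹·z₍₀₎. -/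

import Mathlib

set_option maxHeartbeats 1000000
set_option synthInstance.maxHeartbeats 400000
set_option linter.unusedSectionVars false


open TensorProduct

noncomputable section

/-- Scalar multiplication by a fixed `h : H` as a `k`-linear map. -/
def smulL (k : Type) {H M : Type} [CommRing k] [Ring H] [AddCommGroup M]
    [Module k M] [Module H M] [SMulCommClass H k M] (h : H) : M →ₗ[k] M where
  toFun m := h • m
  map_add' := smul_add h
  map_smul' c m := smul_comm h c m

/-- The module action `H ⊗ M → M` as a linear map. -/
def actT (k H M : Type) [CommRing k] [Ring H] [Algebra k H] [AddCommGroup M]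
    [Module k M] [Module H M] [IsScalarTower k H M] [SMulCommClass H k M] :
    H ⊗[k] M →ₗ[k] M :=
  TensorProduct.lift
    { toFun := fun h => smulL k h
      map_add' := fun h h' => LinearMap.ext fun m => add_smul h h' m
      map_smul' := fun c h => LinearMap.ext fun m => smul_assoc c h m }

/-- Quasitriangular structure, with the R-matrix given by a finite family
`R = ∑ i, R1 i ⊗ R2 i`, satisfying (QT1)-(QT4) and invertibility. -/
structure QT (k H : Type) [CommRing k] [Ring H] [HopfAlgebra k H]
    {ι : Type} [Fintype ι] (R1 R2 : ι → H) : Prop where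
  qt1a : ∑ i, Coalgebra.counit (R := k) (R1 i) • R2 i = (1 : H)
  qt1b : ∑ i, Coalgebra.counit (R := k) (R2 i) • R1 i = (1 : H)
  qt2 : ∑ i, Coalgebra.comul (R := k) (R1 i) ⊗ₜ[k] R2 i
      = ∑ i, ∑ j, (R1 i ⊗ₜ[k] R1 j) ⊗ₜ[k] (R2 i * R2 j)
  qt3 : ∑ i, R1 i ⊗ₜ[k] Coalgebra.comul (R := k) (R2 i)
      = ∑ i, ∑ j, (R1 i * R1 j) ⊗ₜ[k] (R2 j ⊗ₜ[k] R2 i)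
  qt4 : ∀ h : H, (∑ i, R1 i ⊗ₜ[k] R2 i) * Coalgebra.comul (R := k) h
      = TensorProduct.comm k H H (Coalgebra.comul (R := k) h) * (∑ i, R1 i ⊗ₜ[k] R2 i)
  isUnit : IsUnit (∑ i, R1 i ⊗ₜ[k] R2 i)

/-- The left adjoint action `h ⊗ x ↦ h₁ x S(h₂)` as a linear map. -/
def adjT (k H : Type) [CommRing k] [Ring H] [HopfAlgebra k H] : H ⊗[k] H →ₗ[k] H :=
  (LinearMap.mul' k H) ∘ₗ
    (LinearMap.lTensor H (LinearMap.mul' k H)) ∘ₗ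
    (LinearMap.lTensor H ((TensorProduct.map (LinearMap.id : H →ₗ[k] H)
        (HopfAlgebra.antipode (R := k))) ∘ₗ (TensorProduct.comm k H H).toLinearMap)) ∘ₗ
    (TensorProduct.assoc k H H H).toLinearMap ∘ₗ
    (LinearMap.rTensor H (Coalgebra.comul (R := k)))

/-- The diagonal action of `H` on `M ⊗ N`, `h ⊗ (m ⊗ n) ↦ h₁·m ⊗ h₂·n`. -/
def actD (k H M N : Type) [CommRing k] [Ring H] [HopfAlgebra k H]
    [AddCommGroup M] [Module k M] [Module H M] [IsScalarTower k H M] [SMulCommClass H k M]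
    [AddCommGroup N] [Module k N] [Module H N] [IsScalarTower k H N] [SMulCommClass H k N] :
    H ⊗[k] (M ⊗[k] N) →ₗ[k] M ⊗[k] N :=
  (TensorProduct.map (actT k H M) (actT k H N)) ∘ₗ
    (TensorProduct.tensorTensorTensorComm k H H M N).toLinearMap ∘ₗ
    (LinearMap.rTensor (M ⊗[k] N) (Coalgebra.comul (R := k)))

/-- Left-hand side of the Yetter-Drinfeld compatibility condition,
`h ⊗ m ↦ h₁ m₍₋₁₎ ⊗ h₂ · m₍₀₎`, relative to an action map `act` and coaction `lam`. -/
def ydLa (k H M : Type) [CommRing k] [Ring H] [HopfAlgebra k H] [AddCommGroup M] [Module k M]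
    (act : H ⊗[k] M →ₗ[k] M) (lam : M →ₗ[k] H ⊗[k] M) : H ⊗[k] M →ₗ[k] H ⊗[k] M :=
  (TensorProduct.map (LinearMap.mul' k H) act) ∘ₗ
    (TensorProduct.tensorTensorTensorComm k H H H M).toLinearMap ∘ₗ
    (TensorProduct.map (Coalgebra.comul (R := k)) lam)

/-- Right-hand side of the Yetter-Drinfeld compatibility condition,
`h ⊗ m ↦ (h₁·m)₍₋₁₎ h₂ ⊗ (h₁·m)₍₀₎`. -/
def ydRa (k H M : Type) [CommRing k] [Ring H] [HopfAlgebra k H] [AddCommGroup M] [Module k M]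
    (act : H ⊗[k] M →ₗ[k] M) (lam : M →ₗ[k] H ⊗[k] M) : H ⊗[k] M →ₗ[k] H ⊗[k] M :=
  (LinearMap.rTensor M ((LinearMap.mul' k H) ∘ₗ (TensorProduct.comm k H H).toLinearMap)) ∘ₗ
    (TensorProduct.assoc k H H M).symm.toLinearMap ∘ₗ
    (LinearMap.lTensor H (lam ∘ₗ act)) ∘ₗ
    (TensorProduct.assoc k H H M).toLinearMap ∘ₗ
    (LinearMap.rTensor M (TensorProduct.comm k H H).toLinearMap) ∘ₗ
    (LinearMap.rTensor M (Coalgebra.comul (R := k)))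


noncomputable section HopfPrelim

open Coalgebra HopfAlgebra LinearMap

variable {k H : Type} [CommRing k] [Ring H] [HopfAlgebra k H]

section Conv

variable {C : Type} [AddCommGroup C] [Module k C] [Coalgebra k C]

/-- Convolution product on linear maps from a coalgebra to `H`. -/
def conv (f g : C →ₗ[k] H) : C →ₗ[k] H :=
  LinearMap.mul' k H ∘ₗ TensorProduct.map f g ∘ₗ Coalgebra.comul

lemma conv_repr (f g : C →ₗ[k] H) (c : C) {ι : Type*} (r : Coalgebra.Repr k c ι) :
    conv f g c = ∑ i ∈ r.index, f (r.left i) * g (r.right i) := by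
  simp only [conv, LinearMap.comp_apply, ← r.eq, map_sum, TensorProduct.map_tmul,
    LinearMap.mul'_apply]

/-- Convolution unit. -/
def convUnit : C →ₗ[k] H := Algebra.linearMap k H ∘ₗ Coalgebra.counit

lemma conv_unit_left (f : C →ₗ[k] H) : conv convUnit f = f := by
  apply LinearMap.ext; intro c
  have key := congrArg (TensorProduct.lid k C) (Coalgebra.sum_counit_tmul_eq (ℛ k c))
  simp only [map_sum, TensorProduct.lid_tmul, one_smul] at key
  rw [conv_repr _ _ _ (ℛ k c)]
  calc ∑ i ∈ (ℛ k c).index, convUnit ((ℛ k c).left i) * f ((ℛ k c).right i)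
      = ∑ i ∈ (ℛ k c).index, Coalgebra.counit (R := k) ((ℛ k c).left i) • f ((ℛ k c).right i) := by
        refine Finset.sum_congr rfl fun i _ => ?_
        simp [convUnit, Algebra.smul_def]
    _ = f (∑ i ∈ (ℛ k c).index,
          Coalgebra.counit (R := k) ((ℛ k c).left i) • (ℛ k c).right i) := by
        rw [map_sum]; simp
    _ = f c := by rw [key]

lemma conv_unit_right (f : C →ₗ[k] H) : conv f convUnit = f := by
  apply LinearMap.ext; intro c
  have key := congrArg (TensorProduct.rid k C) (Coalgebra.sum_tmul_counit_eq (ℛ k c))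
  simp only [map_sum, TensorProduct.rid_tmul, one_smul] at key
  rw [conv_repr _ _ _ (ℛ k c)]
  calc ∑ i ∈ (ℛ k c).index, f ((ℛ k c).left i) * convUnit ((ℛ k c).right i)
      = ∑ i ∈ (ℛ k c).index, Coalgebra.counit (R := k) ((ℛ k c).right i) • f ((ℛ k c).left i) := by
        refine Finset.sum_congr rfl fun i _ => ?_
        simp [convUnit, Algebra.smul_def, ← Algebra.commutes]
    _ = f (∑ i ∈ (ℛ k c).index,
          Coalgebra.counit (R := k) ((ℛ k c).right i) • (ℛ k c).left i) := by
        rw [map_sum]; simp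
    _ = f c := by rw [key]

lemma conv_assoc (f g h : C →ₗ[k] H) : conv (conv f g) h = conv f (conv g h) := by
  apply LinearMap.ext; intro c
  classical
  have key := Coalgebra.sum_tmul_tmul_eq (ℛ k c) (fun i => ℛ k ((ℛ k c).left i))
    (fun i => ℛ k ((ℛ k c).right i))
  have key2 := congrArg (LinearMap.mul' k H ∘ₗ TensorProduct.map f
      (LinearMap.mul' k H ∘ₗ TensorProduct.map g h)) key
  simp only [map_sum, LinearMap.comp_apply, TensorProduct.map_tmul,
    LinearMap.mul'_apply] at key2
  rw [conv_repr _ _ _ (ℛ k c), conv_repr _ _ _ (ℛ k c)]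
  calc ∑ i ∈ (ℛ k c).index, conv f g ((ℛ k c).left i) * h ((ℛ k c).right i)
      = ∑ i ∈ (ℛ k c).index, ∑ j ∈ (ℛ k ((ℛ k c).left i)).index,
          f ((ℛ k ((ℛ k c).left i)).left j) *
            (g ((ℛ k ((ℛ k c).left i)).right j) * h ((ℛ k c).right i)) := by
        refine Finset.sum_congr rfl fun i _ => ?_
        rw [conv_repr _ _ _ (ℛ k ((ℛ k c).left i)), Finset.sum_mul]
        exact Finset.sum_congr rfl fun j _ => mul_assoc _ _ _
    _ = ∑ i ∈ (ℛ k c).index, ∑ j ∈ (ℛ k ((ℛ k c).right i)).index,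
          f ((ℛ k c).left i) *
            (g ((ℛ k ((ℛ k c).right i)).left j) * h ((ℛ k ((ℛ k c).right i)).right j)) := key2
    _ = ∑ i ∈ (ℛ k c).index, f ((ℛ k c).left i) * conv g h ((ℛ k c).right i) := by
        refine Finset.sum_congr rfl fun i _ => ?_
        rw [conv_repr _ _ _ (ℛ k ((ℛ k c).right i)), Finset.mul_sum]

end Conv

end HopfPrelim
section Anti

open Coalgebra HopfAlgebra LinearMap

variable {k H : Type} [CommRing k] [Ring H] [HopfAlgebra k H]

/-- Repr for a product. -/
def Coalgebra.Repr.mulRepr {x y : H} {ι κ : Type*} (rx : Coalgebra.Repr k x ι) (ry : Coalgebra.Repr k y κ) :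
    Coalgebra.Repr k (x * y) (ι × κ) where
  index := rx.index ×ˢ ry.index
  left p := rx.left p.1 * ry.left p.2
  right p := rx.right p.1 * ry.right p.2
  eq := by
    rw [Bialgebra.comul_mul, ← rx.eq, ← ry.eq, Finset.sum_mul_sum]
    rw [Finset.sum_product]
    simp [Algebra.TensorProduct.tmul_mul_tmul]

/-- Repr for a pure tensor in `H ⊗ H`. -/
noncomputable def Coalgebra.Repr.tmulRepr {x y : H} {ι κ : Type*} (rx : Coalgebra.Repr k x ι) (ry : Coalgebra.Repr k y κ) :
    Coalgebra.Repr k (x ⊗ₜ[k] y) (ι × κ) where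
  index := rx.index ×ˢ ry.index
  left p := rx.left p.1 ⊗ₜ[k] ry.left p.2
  right p := rx.right p.1 ⊗ₜ[k] ry.right p.2
  eq := by
    have : Coalgebra.comul (R := k) (x ⊗ₜ[k] y) =
        TensorProduct.tensorTensorTensorComm k H H H H
          (Coalgebra.comul (R := k) x ⊗ₜ[k] Coalgebra.comul (R := k) y) := rfl
    rw [this, ← rx.eq, ← ry.eq, TensorProduct.sum_tmul]
    simp only [TensorProduct.tmul_sum, map_sum, TensorProduct.tensorTensorTensorComm_tmul]
    rw [Finset.sum_product]

lemma counit_tmul (x y : H) :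
    Coalgebra.counit (R := k) (x ⊗ₜ[k] y) =
      Coalgebra.counit (R := k) x * Coalgebra.counit (R := k) y := by
  rw [TensorProduct.counit_tmul, smul_eq_mul, mul_comm]

lemma claim1 : conv (LinearMap.mul' k H)
    ((antipode (R := k)) ∘ₗ LinearMap.mul' k H) = (convUnit : H ⊗[k] H →ₗ[k] H) := by
  apply TensorProduct.ext'
  intro x y
  rw [conv_repr _ _ _ ((ℛ k x).tmulRepr (ℛ k y))]
  have := HopfAlgebra.sum_mul_antipode_eq_algebraMap_counit ((ℛ k x).mulRepr (ℛ k y))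
  simp only [Coalgebra.Repr.mulRepr, Finset.sum_product] at this
  simp only [Coalgebra.Repr.tmulRepr, Finset.sum_product, LinearMap.comp_apply,
    LinearMap.mul'_apply]
  rw [this]
  simp [convUnit, _root_.counit_tmul, Bialgebra.counit_mul, mul_comm]

lemma claim2 : conv (LinearMap.mul' k H ∘ₗ
      TensorProduct.map (antipode (R := k)) (antipode (R := k)) ∘ₗ
      (TensorProduct.comm k H H).toLinearMap)
    (LinearMap.mul' k H) = (convUnit : H ⊗[k] H →ₗ[k] H) := by
  apply TensorProduct.ext'
  intro x y
  rw [conv_repr _ _ _ ((ℛ k x).tmulRepr (ℛ k y))]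
  simp only [Coalgebra.Repr.tmulRepr, Finset.sum_product, LinearMap.comp_apply,
    LinearEquiv.coe_coe, TensorProduct.comm_tmul, TensorProduct.map_tmul,
    LinearMap.mul'_apply]
  have hx := HopfAlgebra.sum_antipode_mul_eq_algebraMap_counit (ℛ k x)
  calc ∑ i ∈ (ℛ k x).index, ∑ j ∈ (ℛ k y).index,
        antipode (R := k) ((ℛ k y).left j) * antipode (R := k) ((ℛ k x).left i) *
          ((ℛ k x).right i * (ℛ k y).right j)
      = ∑ j ∈ (ℛ k y).index, antipode (R := k) ((ℛ k y).left j) *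
          (∑ i ∈ (ℛ k x).index, antipode (R := k) ((ℛ k x).left i) * (ℛ k x).right i) *
          (ℛ k y).right j := by
        rw [Finset.sum_comm]
        refine Finset.sum_congr rfl fun j _ => ?_
        rw [Finset.mul_sum, Finset.sum_mul]
        refine Finset.sum_congr rfl fun i _ => ?_
        simp only [mul_assoc]
    _ = Coalgebra.counit (R := k) x • ∑ j ∈ (ℛ k y).index,
          antipode (R := k) ((ℛ k y).left j) * (ℛ k y).right j := by
        rw [hx, Finset.smul_sum]
        refine Finset.sum_congr rfl fun j _ => ?_
        simp [Algebra.algebraMap_eq_smul_one, mul_smul_comm, smul_mul_assoc]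
    _ = algebraMap k H (Coalgebra.counit (R := k) (x ⊗ₜ[k] y)) := by
        rw [HopfAlgebra.sum_antipode_mul_eq_algebraMap_counit (ℛ k y), _root_.counit_tmul, map_mul,
          Algebra.smul_def]

theorem antipode_mul_rev (x y : H) :
    antipode (R := k) (x * y) = antipode (R := k) y * antipode (R := k) x := by
  have key : (antipode (R := k)) ∘ₗ LinearMap.mul' k H =
      LinearMap.mul' k H ∘ₗ
        TensorProduct.map (antipode (R := k)) (antipode (R := k)) ∘ₗ
        (TensorProduct.comm k H H).toLinearMap := by
    calc (antipode (R := k)) ∘ₗ LinearMap.mul' k H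
        = conv convUnit ((antipode (R := k)) ∘ₗ LinearMap.mul' k H) := (conv_unit_left _).symm
      _ = conv (conv (LinearMap.mul' k H ∘ₗ
            TensorProduct.map (antipode (R := k)) (antipode (R := k)) ∘ₗ
            (TensorProduct.comm k H H).toLinearMap) (LinearMap.mul' k H))
            ((antipode (R := k)) ∘ₗ LinearMap.mul' k H) := by rw [claim2]
      _ = conv (LinearMap.mul' k H ∘ₗ
            TensorProduct.map (antipode (R := k)) (antipode (R := k)) ∘ₗ
            (TensorProduct.comm k H H).toLinearMap)
            (conv (LinearMap.mul' k H) ((antipode (R := k)) ∘ₗ LinearMap.mul' k H)) :=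
          conv_assoc _ _ _
      _ = conv (LinearMap.mul' k H ∘ₗ
            TensorProduct.map (antipode (R := k)) (antipode (R := k)) ∘ₗ
            (TensorProduct.comm k H H).toLinearMap) convUnit := by rw [claim1]
      _ = _ := conv_unit_right _
  have := LinearMap.congr_fun key (x ⊗ₜ[k] y)
  simpa using this

theorem antipode_one' : antipode (R := k) (1 : H) = 1 := by
  have := HopfAlgebra.mul_antipode_rTensor_comul_apply (R := k) (1 : H)
  rw [Bialgebra.comul_one, Algebra.TensorProduct.one_def] at this
  simpa using this

end Anti

section SinvLemmas

open Coalgebra HopfAlgebra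

variable {k H : Type} [CommRing k] [Ring H] [HopfAlgebra k H]
variable {Sinv : H →ₗ[k] H}

lemma antipode_injective
    (hS2 : Sinv ∘ₗ (HopfAlgebra.antipode (R := k) (A := H)) = LinearMap.id) :
    Function.Injective (antipode (R := k) (A := H)) := by
  intro u v h
  have h1 := LinearMap.congr_fun hS2 u
  have h2 := LinearMap.congr_fun hS2 v
  simp only [LinearMap.comp_apply, LinearMap.id_apply] at h1 h2
  rw [← h1, ← h2, h]

lemma antipode_Sinv
    (hS1 : (HopfAlgebra.antipode (R := k) (A := H)) ∘ₗ Sinv = LinearMap.id) (x : H) :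
    antipode (R := k) (Sinv x) = x := by
  simpa using LinearMap.congr_fun hS1 x

lemma Sinv_antipode
    (hS2 : Sinv ∘ₗ (HopfAlgebra.antipode (R := k) (A := H)) = LinearMap.id) (x : H) :
    Sinv (antipode (R := k) x) = x := by
  simpa using LinearMap.congr_fun hS2 x

lemma Sinv_mul
    (hS1 : (HopfAlgebra.antipode (R := k) (A := H)) ∘ₗ Sinv = LinearMap.id)
    (hS2 : Sinv ∘ₗ (HopfAlgebra.antipode (R := k) (A := H)) = LinearMap.id)
    (x y : H) : Sinv (x * y) = Sinv y * Sinv x := by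
  apply antipode_injective hS2
  rw [antipode_Sinv hS1, antipode_mul_rev, antipode_Sinv hS1, antipode_Sinv hS1]

lemma Sinv_one
    (hS1 : (HopfAlgebra.antipode (R := k) (A := H)) ∘ₗ Sinv = LinearMap.id)
    (hS2 : Sinv ∘ₗ (HopfAlgebra.antipode (R := k) (A := H)) = LinearMap.id) :
    Sinv (1 : H) = 1 := by
  apply antipode_injective hS2
  rw [antipode_Sinv hS1, antipode_one']

lemma sum_Sinv_right_mul_left
    (hS1 : (HopfAlgebra.antipode (R := k) (A := H)) ∘ₗ Sinv = LinearMap.id)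
    (hS2 : Sinv ∘ₗ (HopfAlgebra.antipode (R := k) (A := H)) = LinearMap.id)
    {h : H} {ι : Type*} (r : Coalgebra.Repr k h ι) :
    ∑ i ∈ r.index, Sinv (r.right i) * r.left i = Coalgebra.counit (R := k) h • 1 := by
  apply antipode_injective hS2
  rw [map_sum]
  calc ∑ i ∈ r.index, antipode (R := k) (Sinv (r.right i) * r.left i)
      = ∑ i ∈ r.index, antipode (R := k) (r.left i) * r.right i := by
        refine Finset.sum_congr rfl fun i _ => ?_
        rw [antipode_mul_rev, antipode_Sinv hS1]
    _ = algebraMap k H (Coalgebra.counit (R := k) h) := HopfAlgebra.sum_antipode_mul_eq_algebraMap_counit r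
    _ = antipode (R := k) (Coalgebra.counit (R := k) h • (1 : H)) := by
        rw [map_smul, antipode_one', Algebra.algebraMap_eq_smul_one]

lemma sum_right_mul_Sinv_left
    (hS1 : (HopfAlgebra.antipode (R := k) (A := H)) ∘ₗ Sinv = LinearMap.id)
    (hS2 : Sinv ∘ₗ (HopfAlgebra.antipode (R := k) (A := H)) = LinearMap.id)
    {h : H} {ι : Type*} (r : Coalgebra.Repr k h ι) :
    ∑ i ∈ r.index, r.right i * Sinv (r.left i) = Coalgebra.counit (R := k) h • 1 := by
  apply antipode_injective hS2
  rw [map_sum]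
  calc ∑ i ∈ r.index, antipode (R := k) (r.right i * Sinv (r.left i))
      = ∑ i ∈ r.index, r.left i * antipode (R := k) (r.right i) := by
        refine Finset.sum_congr rfl fun i _ => ?_
        rw [antipode_mul_rev, antipode_Sinv hS1]
    _ = algebraMap k H (Coalgebra.counit (R := k) h) := HopfAlgebra.sum_mul_antipode_eq_algebraMap_counit r
    _ = antipode (R := k) (Coalgebra.counit (R := k) h • (1 : H)) := by
        rw [map_smul, antipode_one', Algebra.algebraMap_eq_smul_one]

end SinvLemmas

section MainAux

lemma smulL_apply (k : Type) {H M : Type} [CommRing k] [Ring H] [AddCommGroup M]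
    [Module k M] [Module H M] [SMulCommClass H k M] (h : H) (m : M) :
    (smulL k h : M →ₗ[k] M) m = h • m := rfl

@[simp] lemma actT_tmul (k H M : Type) [CommRing k] [Ring H] [Algebra k H] [AddCommGroup M]
    [Module k M] [Module H M] [IsScalarTower k H M] [SMulCommClass H k M] (h : H) (m : M) :
    actT k H M (h ⊗ₜ[k] m) = h • m := rfl

end MainAux

section AeAction

variable (k H A Z : Type) [Field k] [Ring H] [HopfAlgebra k H]
variable [Ring A] [Algebra k A] [Module H A] [IsScalarTower k H A] [SMulCommClass H k A]
variable [AddCommGroup Z] [Module k Z] [Module H Z] [IsScalarTower k H Z] [SMulCommClass H k Z]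
variable {ι : Type} [Fintype ι] (R1 R2 : ι → H)

/-- The multiplication of the braided enveloping algebra `Aᵉ = A ⊗ Ā`:
`(a⊗b̄)(c⊗d̄) = ∑ a(R²·c) ⊗ (r²·d)(r¹R¹·b)`. -/
def mAe : (A ⊗[k] A) ⊗[k] (A ⊗[k] A) →ₗ[k] A ⊗[k] A :=
  ∑ i, ∑ j,
    (TensorProduct.map
      ((LinearMap.mul' k A) ∘ₗ (LinearMap.lTensor A (smulL k (R2 i) : A →ₗ[k] A)))
      ((LinearMap.mul' k A) ∘ₗ
        (TensorProduct.map (smulL k (R2 j) : A →ₗ[k] A)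
          (smulL k (R1 j * R1 i) : A →ₗ[k] A)) ∘ₗ
        (TensorProduct.comm k A A).toLinearMap)) ∘ₗ
    (TensorProduct.tensorTensorTensorComm k A A A A).toLinearMap

/-- The `Aᵉ`-action on `A ⊗ Z`:
`(a⊗b̄)•(c⊗z) = ∑ a(R²·c)(r²S⁻¹(z₍₋₁₎)R¹·b) ⊗ r¹·z₍₀₎`. -/
def aeAct (Sinv : H →ₗ[k] H) (lamZ : Z →ₗ[k] H ⊗[k] Z) :
    (A ⊗[k] A) ⊗[k] (A ⊗[k] Z) →ₗ[k] A ⊗[k] Z :=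
  ∑ i, ∑ j,
    (LinearMap.rTensor Z (LinearMap.mul' k A)) ∘ₗ
    (TensorProduct.assoc k A A Z).symm.toLinearMap ∘ₗ
    (TensorProduct.map
      ((LinearMap.mul' k A) ∘ₗ (LinearMap.lTensor A (smulL k (R2 i) : A →ₗ[k] A)))
      ((TensorProduct.map
          ((actT k H A) ∘ₗ (LinearMap.rTensor A
            ((LinearMap.mulLeft k (R2 j)) ∘ₗ (LinearMap.mulRight k (R1 i)) ∘ₗ Sinv)))
          (smulL k (R1 j) : Z →ₗ[k] Z)) ∘ₗ
        (LinearMap.rTensor Z (TensorProduct.comm k A H).toLinearMap) ∘ₗ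
        (TensorProduct.assoc k A H Z).symm.toLinearMap)) ∘ₗ
    (TensorProduct.tensorTensorTensorComm k A A A (H ⊗[k] Z)).toLinearMap ∘ₗ
    (LinearMap.lTensor (A ⊗[k] A) (LinearMap.lTensor A lamZ))

/-- `χ⁺(a) = ∑ R²·a₍₀₎ ⊗ R¹a₍₋₁₎` on `A`. -/
def chiPlusA (lamA : A →ₗ[k] H ⊗[k] A) : A →ₗ[k] A ⊗[k] H :=
  ∑ i, (TensorProduct.map (smulL k (R2 i) : A →ₗ[k] A) (LinearMap.mulLeft k (R1 i))) ∘ₗ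
    (TensorProduct.comm k H A).toLinearMap ∘ₗ lamA

/-- `χ⁻(z) = ∑ z₍₋₁₎S(R²) ⊗ R¹·z₍₀₎` on `Z`. -/
def chiMinusZ (lamZ : Z →ₗ[k] H ⊗[k] Z) : Z →ₗ[k] H ⊗[k] Z :=
  ∑ i, (TensorProduct.map (LinearMap.mulRight k (HopfAlgebra.antipode (R := k) (R2 i)))
    (smulL k (R1 i) : Z →ₗ[k] Z)) ∘ₗ lamZ

lemma rmatrix_inv (hqt : QT k H R1 R2) (Sinv : H →ₗ[k] H)
    (hS1 : (HopfAlgebra.antipode (R := k) (A := H)) ∘ₗ Sinv = LinearMap.id)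
    (hS2 : Sinv ∘ₗ (HopfAlgebra.antipode (R := k) (A := H)) = LinearMap.id) :
    ∑ i, ∑ j, (Sinv (R1 i) * R1 j) ⊗ₜ[k] (R2 j * R2 i) = (1 : H) ⊗ₜ[k] (1 : H) := by
  classical
  have key := congrArg (LinearMap.rTensor H ((LinearMap.mul' k H) ∘ₗ
      (LinearMap.rTensor H Sinv) ∘ₗ (TensorProduct.comm k H H).toLinearMap)) hqt.qt2
  simp only [map_sum, LinearMap.rTensor_tmul, LinearMap.coe_comp, Function.comp_apply,
    LinearEquiv.coe_coe, TensorProduct.comm_tmul, LinearMap.mul'_apply] at key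
  have lhs_eq : ∀ i : ι, (LinearMap.mul' k H) ((LinearMap.rTensor H Sinv)
      ((TensorProduct.comm k H H) (Coalgebra.comul (R := k) (R1 i))))
      = Coalgebra.counit (R := k) (R1 i) • (1 : H) := by
    intro i
    rw [← (Coalgebra.Repr.arbitrary k (R1 i)).eq, map_sum, map_sum, map_sum]
    simp only [TensorProduct.comm_tmul, LinearMap.rTensor_tmul, LinearMap.mul'_apply]
    exact sum_Sinv_right_mul_left hS1 hS2 _
  have key2 : ∑ i, (Coalgebra.counit (R := k) (R1 i) • (1 : H)) ⊗ₜ[k] R2 i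
      = ∑ x : ι, ∑ y : ι, (Sinv (R1 y) * R1 x) ⊗ₜ[k] (R2 x * R2 y) := by
    rw [← key]
    exact Finset.sum_congr rfl fun i _ => by rw [lhs_eq i]
  have lhs2 : ∑ i, (Coalgebra.counit (R := k) (R1 i) • (1 : H)) ⊗ₜ[k] R2 i
      = (1 : H) ⊗ₜ[k] (1 : H) := by
    calc ∑ i, (Coalgebra.counit (R := k) (R1 i) • (1 : H)) ⊗ₜ[k] R2 i
        = (1 : H) ⊗ₜ[k] ∑ i, Coalgebra.counit (R := k) (R1 i) • R2 i := by
          rw [TensorProduct.tmul_sum]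
          exact Finset.sum_congr rfl fun i _ => by rw [TensorProduct.smul_tmul]
      _ = (1 : H) ⊗ₜ[k] (1 : H) := by rw [hqt.qt1a]
  rw [Finset.sum_comm, ← key2, lhs2]

/-- The auxiliary map `Φ : x ⊗ (h ⊗ y) ↦ ∑ᵢ (R²ᵢ·x)((S⁻¹(h)R¹ᵢ)·a) ⊗ y`. -/
def phiMap (Sinv : H →ₗ[k] H) (a : A) : A ⊗[k] (H ⊗[k] Z) →ₗ[k] A ⊗[k] Z :=
  ∑ i, (LinearMap.rTensor Z ((LinearMap.mul' k A) ∘ₗ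
      (LinearMap.rTensor A (smulL k (R2 i) : A →ₗ[k] A)))) ∘ₗ
    (TensorProduct.assoc k A A Z).symm.toLinearMap ∘ₗ
    (LinearMap.lTensor A (LinearMap.rTensor Z
      ((actT k H A) ∘ₗ ((TensorProduct.mk k H A).flip a) ∘ₗ
        (LinearMap.mulRight k (R1 i)) ∘ₗ Sinv)))

lemma phiMap_tmul (Sinv : H →ₗ[k] H) (a x : A) (h : H) (y : Z) :
    phiMap k H A Z R1 R2 Sinv a (x ⊗ₜ[k] (h ⊗ₜ[k] y))
      = ∑ i, ((R2 i • x) * ((Sinv h * R1 i) • a)) ⊗ₜ[k] y := by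
  simp only [phiMap, LinearMap.sum_apply, LinearMap.coe_comp, Function.comp_apply,
    LinearMap.lTensor_tmul, LinearMap.rTensor_tmul, LinearEquiv.coe_coe,
    TensorProduct.assoc_symm_tmul, LinearMap.mul'_apply, LinearMap.mulRight_apply,
    LinearMap.flip_apply, TensorProduct.mk_apply, actT_tmul, smulL_apply]

lemma lemA (Sinv : H →ₗ[k] H)
    (hS1 : (HopfAlgebra.antipode (R := k) (A := H)) ∘ₗ Sinv = LinearMap.id)
    (hS2 : Sinv ∘ₗ (HopfAlgebra.antipode (R := k) (A := H)) = LinearMap.id)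
    (lamZ : Z →ₗ[k] H ⊗[k] Z) (a : A) (u : A ⊗[k] Z) :
    aeAct k H A Z R1 R2 Sinv lamZ (((1 : A) ⊗ₜ[k] a) ⊗ₜ[k] u)
      = phiMap k H A Z R1 R2 Sinv a
          ((LinearMap.lTensor A (chiMinusZ k H Z R1 R2 lamZ)) u) := by
  induction u using TensorProduct.induction_on with
  | zero => simp
  | add x y hx hy =>
    rw [TensorProduct.tmul_add, map_add, map_add, map_add, hx, hy]
  | tmul c z =>
    obtain ⟨s, hs⟩ := TensorProduct.exists_finset (R := k) (lamZ z)
    have hL : aeAct k H A Z R1 R2 Sinv lamZ (((1 : A) ⊗ₜ[k] a) ⊗ₜ[k] (c ⊗ₜ[k] z))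
        = ∑ i, ∑ j, ∑ p ∈ s,
            (((1 : A) * (R2 i • c)) * ((R2 j * (Sinv p.1 * R1 i)) • a)) ⊗ₜ[k]
              (R1 j • p.2) := by
      simp only [aeAct, LinearMap.sum_apply, LinearMap.coe_comp, Function.comp_apply,
        LinearMap.lTensor_tmul, hs, TensorProduct.tmul_sum, map_sum,
        TensorProduct.tensorTensorTensorComm_tmul, TensorProduct.map_tmul,
        LinearEquiv.coe_coe, TensorProduct.assoc_symm_tmul, LinearMap.rTensor_tmul,
        TensorProduct.comm_tmul, smulL_apply, actT_tmul, LinearMap.mul'_apply,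
        LinearMap.mulLeft_apply, LinearMap.mulRight_apply]
    have hR : phiMap k H A Z R1 R2 Sinv a
          ((LinearMap.lTensor A (chiMinusZ k H Z R1 R2 lamZ)) (c ⊗ₜ[k] z))
        = ∑ j, ∑ p ∈ s, ∑ i,
            ((R2 i • c) *
              ((Sinv (p.1 * HopfAlgebra.antipode (R := k) (R2 j)) * R1 i) • a)) ⊗ₜ[k]
              (R1 j • p.2) := by
      rw [LinearMap.lTensor_tmul]
      simp only [chiMinusZ, LinearMap.sum_apply, LinearMap.coe_comp, Function.comp_apply,
        hs, map_sum, TensorProduct.map_tmul, LinearMap.mulRight_apply, smulL_apply,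
        TensorProduct.tmul_sum, phiMap_tmul]
    rw [hL, hR, Finset.sum_comm]
    refine Finset.sum_congr rfl fun j _ => ?_
    rw [Finset.sum_comm]
    refine Finset.sum_congr rfl fun p _ => Finset.sum_congr rfl fun i _ => ?_
    rw [one_mul, Sinv_mul hS1 hS2, Sinv_antipode hS2, mul_assoc]

lemma lemB (hqt : QT k H R1 R2) (Sinv : H →ₗ[k] H)
    (hS1 : (HopfAlgebra.antipode (R := k) (A := H)) ∘ₗ Sinv = LinearMap.id)
    (hS2 : Sinv ∘ₗ (HopfAlgebra.antipode (R := k) (A := H)) = LinearMap.id)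
    (lamA : A →ₗ[k] H ⊗[k] A)
    (hAcounit : ∀ a : A, (TensorProduct.lid k A)
        ((LinearMap.rTensor A (Coalgebra.counit (R := k))) (lamA a)) = a)
    (hAcoassoc : (LinearMap.rTensor A (Coalgebra.comul (R := k))) ∘ₗ lamA
        = (TensorProduct.assoc k H H A).symm.toLinearMap ∘ₗ
          (LinearMap.lTensor H lamA) ∘ₗ lamA)
    (hqc : (LinearMap.mul' k A)
        = (LinearMap.mul' k A) ∘ₗ (TensorProduct.comm k A A).toLinearMap ∘ₗ
          (LinearMap.lTensor A (actT k H A)) ∘ₗ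
          (TensorProduct.assoc k A H A).toLinearMap ∘ₗ
          (LinearMap.rTensor A (TensorProduct.comm k H A).toLinearMap) ∘ₗ
          (LinearMap.rTensor A lamA))
    (a : A) (u : A ⊗[k] Z) :
    phiMap k H A Z R1 R2 Sinv a ((TensorProduct.assoc k A H Z)
        ((LinearMap.rTensor Z (chiPlusA k H A R1 R2 lamA)) u))
      = (LinearMap.rTensor Z (LinearMap.mulLeft k a)) u := by
  classical
  have hqc' : ∀ (x y : A) (t : Finset (H × A)), lamA x = ∑ q ∈ t, q.1 ⊗ₜ[k] q.2 →
      x * y = ∑ q ∈ t, (q.1 • y) * q.2 := by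
    intro x y t ht
    have := LinearMap.congr_fun hqc (x ⊗ₜ[k] y)
    simp only [LinearMap.mul'_apply, LinearMap.coe_comp, Function.comp_apply,
      LinearMap.rTensor_tmul, ht, TensorProduct.sum_tmul, map_sum, LinearEquiv.coe_coe,
      TensorProduct.comm_tmul, TensorProduct.assoc_tmul, LinearMap.lTensor_tmul,
      actT_tmul] at this
    exact this
  induction u using TensorProduct.induction_on with
  | zero => simp
  | add x y hx hy => rw [map_add, map_add, map_add, map_add, hx, hy]
  | tmul c z =>
    obtain ⟨s, hs⟩ := TensorProduct.exists_finset (R := k) (lamA c)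
    have hL : phiMap k H A Z R1 R2 Sinv a ((TensorProduct.assoc k A H Z)
          ((LinearMap.rTensor Z (chiPlusA k H A R1 R2 lamA)) (c ⊗ₜ[k] z)))
        = ∑ i, ∑ p ∈ s, ∑ i',
            ((R2 i' • R2 i • p.2) * ((Sinv (R1 i * p.1) * R1 i') • a)) ⊗ₜ[k] z := by
      simp only [LinearMap.rTensor_tmul, chiPlusA, LinearMap.sum_apply, LinearMap.coe_comp,
        Function.comp_apply, hs, map_sum, LinearEquiv.coe_coe, TensorProduct.comm_tmul,
        TensorProduct.map_tmul, smulL_apply, LinearMap.mulLeft_apply,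
        TensorProduct.sum_tmul, TensorProduct.assoc_tmul, phiMap_tmul]
    rw [hL, Finset.sum_comm]
    have hInner : ∀ p ∈ s, ∑ i, ∑ i',
          ((R2 i' • R2 i • p.2) * ((Sinv (R1 i * p.1) * R1 i') • a)) ⊗ₜ[k] z
        = (p.2 * (Sinv p.1 • a)) ⊗ₜ[k] z := by
      intro p _
      set G : H ⊗[k] H →ₗ[k] A ⊗[k] Z :=
        ((TensorProduct.mk k A Z).flip z) ∘ₗ (LinearMap.mul' k A) ∘ₗ
          (TensorProduct.map ((actT k H A) ∘ₗ (TensorProduct.mk k H A).flip p.2)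
            ((actT k H A) ∘ₗ ((TensorProduct.mk k H A).flip a) ∘ₗ
              (LinearMap.mulLeft k (Sinv p.1)))) ∘ₗ
          (TensorProduct.comm k H H).toLinearMap with hGdef
      have hG : ∀ v u : H, G (v ⊗ₜ[k] u)
          = ((u • p.2) * ((Sinv p.1 * v) • a)) ⊗ₜ[k] z := by
        intro v u
        simp only [hGdef, LinearMap.coe_comp, Function.comp_apply, LinearEquiv.coe_coe,
          TensorProduct.comm_tmul, TensorProduct.map_tmul, LinearMap.flip_apply,
          TensorProduct.mk_apply, actT_tmul, LinearMap.mulLeft_apply,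
          LinearMap.mul'_apply]
      calc ∑ i, ∑ i', ((R2 i' • R2 i • p.2) * ((Sinv (R1 i * p.1) * R1 i') • a)) ⊗ₜ[k] z
          = ∑ i, ∑ i', G ((Sinv (R1 i) * R1 i') ⊗ₜ[k] (R2 i' * R2 i)) := by
            refine Finset.sum_congr rfl fun i _ => Finset.sum_congr rfl fun i' _ => ?_
            rw [hG, smul_smul, Sinv_mul hS1 hS2, mul_assoc]
        _ = G (∑ i, ∑ i', (Sinv (R1 i) * R1 i') ⊗ₜ[k] (R2 i' * R2 i)) := by
            rw [map_sum]
            exact Finset.sum_congr rfl fun i _ => (map_sum G _ _).symm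
        _ = G ((1 : H) ⊗ₜ[k] (1 : H)) := by
            rw [rmatrix_inv k H R1 R2 hqt Sinv hS1 hS2]
        _ = (p.2 * (Sinv p.1 • a)) ⊗ₜ[k] z := by
            rw [hG, one_smul, mul_one]
    rw [Finset.sum_congr rfl hInner, ← TensorProduct.sum_tmul, LinearMap.rTensor_tmul,
      LinearMap.mulLeft_apply]
    congr 1
    -- It remains to show `∑ p ∈ s, p.2 * (Sinv p.1 • a) = a * c`.
    set T : H × A → Finset (H × A) :=
      fun p => (TensorProduct.exists_finset (R := k) (lamA p.2)).choose with hTdef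
    have hT : ∀ p : H × A, lamA p.2 = ∑ q ∈ T p, q.1 ⊗ₜ[k] q.2 :=
      fun p => (TensorProduct.exists_finset (R := k) (lamA p.2)).choose_spec
    have step1 : ∑ p ∈ s, p.2 * (Sinv p.1 • a)
        = ∑ p ∈ s, ∑ q ∈ T p, ((q.1 * Sinv p.1) • a) * q.2 := by
      refine Finset.sum_congr rfl fun p _ => ?_
      rw [hqc' p.2 (Sinv p.1 • a) (T p) (hT p)]
      exact Finset.sum_congr rfl fun q _ => by rw [smul_smul]
    set ψ : H ⊗[k] H →ₗ[k] A :=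
      (actT k H A) ∘ₗ ((TensorProduct.mk k H A).flip a) ∘ₗ (LinearMap.mul' k H) ∘ₗ
        (LinearMap.lTensor H Sinv) ∘ₗ (TensorProduct.comm k H H).toLinearMap with hψdef
    have hψ : ∀ h g : H, ψ (h ⊗ₜ[k] g) = ((g * Sinv h) • a) := by
      intro h g
      simp only [hψdef, LinearMap.coe_comp, Function.comp_apply, LinearEquiv.coe_coe,
        TensorProduct.comm_tmul, LinearMap.lTensor_tmul, LinearMap.mul'_apply,
        LinearMap.flip_apply, TensorProduct.mk_apply, actT_tmul]
    set F : (H ⊗[k] H) ⊗[k] A →ₗ[k] A :=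
      (LinearMap.mul' k A) ∘ₗ (TensorProduct.map ψ LinearMap.id) with hFdef
    have key := LinearMap.congr_fun hAcoassoc c
    simp only [LinearMap.coe_comp, Function.comp_apply] at key
    -- right side of keyF
    have hRight : F ((LinearMap.rTensor A (Coalgebra.comul (R := k))) (lamA c))
        = ∑ p ∈ s, ∑ q ∈ T p, ((q.1 * Sinv p.1) • a) * q.2 := by
      rw [key, hs]
      simp only [map_sum, LinearMap.lTensor_tmul]
      refine Finset.sum_congr rfl fun p _ => ?_
      rw [hT p]
      simp only [TensorProduct.tmul_sum, map_sum, LinearEquiv.coe_coe,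
        TensorProduct.assoc_symm_tmul, hFdef, LinearMap.coe_comp, Function.comp_apply,
        TensorProduct.map_tmul, LinearMap.id_coe, id_eq, LinearMap.mul'_apply, hψ]
    -- left side of keyF
    have hLeft : F ((LinearMap.rTensor A (Coalgebra.comul (R := k))) (lamA c))
        = ∑ p ∈ s, (Coalgebra.counit (R := k) p.1 • a) * p.2 := by
      rw [hs]
      simp only [map_sum, LinearMap.rTensor_tmul, hFdef, LinearMap.coe_comp,
        Function.comp_apply, TensorProduct.map_tmul, LinearMap.id_coe, id_eq,
        LinearMap.mul'_apply]
      refine Finset.sum_congr rfl fun p _ => ?_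
      congr 1
      rw [← (Coalgebra.Repr.arbitrary k p.1).eq, map_sum]
      calc ∑ q ∈ (Coalgebra.Repr.arbitrary k p.1).index,
            ψ ((Coalgebra.Repr.arbitrary k p.1).left q ⊗ₜ[k]
              (Coalgebra.Repr.arbitrary k p.1).right q)
          = (∑ q ∈ (Coalgebra.Repr.arbitrary k p.1).index,
              (Coalgebra.Repr.arbitrary k p.1).right q *
                Sinv ((Coalgebra.Repr.arbitrary k p.1).left q)) • a := by
            rw [Finset.sum_smul]
            exact Finset.sum_congr rfl fun q _ => hψ _ _
        _ = Coalgebra.counit (R := k) p.1 • a := by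
            rw [sum_right_mul_Sinv_left hS1 hS2 (Coalgebra.Repr.arbitrary k p.1)]
            rw [smul_assoc, one_smul]
    have hCounit : ∑ p ∈ s, Coalgebra.counit (R := k) p.1 • p.2 = c := by
      have := hAcounit c
      rw [hs] at this
      simpa [map_sum] using this
    rw [step1, ← hRight, hLeft]
    calc ∑ p ∈ s, (Coalgebra.counit (R := k) p.1 • a) * p.2
        = a * ∑ p ∈ s, Coalgebra.counit (R := k) p.1 • p.2 := by
          rw [Finset.mul_sum]
          exact Finset.sum_congr rfl fun p _ => by
            rw [smul_mul_assoc, mul_smul_comm]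
      _ = a * c := by rw [hCounit]

/-- Let `(H,R)` be quasitriangular, `A` a quantum commutative
Yetter–Drinfeld module algebra (`ab = ∑ (a₍₋₁₎·b)a₍₀₎`), and `Z` a Yetter–Drinfeld
module. If `w ∈ A ⊗ Z` satisfies the cotensor condition
`∑ R²·c₍₀₎ ⊗ R¹c₍₋₁₎ ⊗ z = ∑ c ⊗ z₍₋₁₎S(R²) ⊗ R¹·z₍₀₎`, then
`(1⊗ā)•w = (a·-)w` for all `a ∈ A`, where `•` is the `Aᵉ`-action of Statement 13. -/
theorem cotensor_invariant (hqt : QT k H R1 R2)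
    (Sinv : H →ₗ[k] H)
    (hS1 : (HopfAlgebra.antipode (R := k) (A := H)) ∘ₗ Sinv = LinearMap.id)
    (hS2 : Sinv ∘ₗ (HopfAlgebra.antipode (R := k) (A := H)) = LinearMap.id)
    -- A is an H-module algebra
    (hAmul : (actT k H A) ∘ₗ (LinearMap.lTensor H (LinearMap.mul' k A))
        = (LinearMap.mul' k A) ∘ₗ
          (TensorProduct.map (actT k H A) (actT k H A)) ∘ₗ
          (TensorProduct.tensorTensorTensorComm k H H A A).toLinearMap ∘ₗ
          (LinearMap.rTensor (A ⊗[k] A) (Coalgebra.comul (R := k))))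
    (hAone : ∀ h : H, h • (1 : A) = Coalgebra.counit (R := k) h • (1 : A))
    -- A is a Yetter–Drinfeld module algebra with coaction lamA
    (lamA : A →ₗ[k] H ⊗[k] A)
    (hAcounit : ∀ a : A, (TensorProduct.lid k A)
        ((LinearMap.rTensor A (Coalgebra.counit (R := k))) (lamA a)) = a)
    (hAcoassoc : (LinearMap.rTensor A (Coalgebra.comul (R := k))) ∘ₗ lamA
        = (TensorProduct.assoc k H H A).symm.toLinearMap ∘ₗ
          (LinearMap.lTensor H lamA) ∘ₗ lamA)
    (hAyd : ydLa k H A (actT k H A) lamA = ydRa k H A (actT k H A) lamA)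
    -- A is quantum commutative: a b = ∑ (a₍₋₁₎·b) a₍₀₎
    (hqc : (LinearMap.mul' k A)
        = (LinearMap.mul' k A) ∘ₗ (TensorProduct.comm k A A).toLinearMap ∘ₗ
          (LinearMap.lTensor A (actT k H A)) ∘ₗ
          (TensorProduct.assoc k A H A).toLinearMap ∘ₗ
          (LinearMap.rTensor A (TensorProduct.comm k H A).toLinearMap) ∘ₗ
          (LinearMap.rTensor A lamA))
    -- Z is a Yetter–Drinfeld module
    (lamZ : Z →ₗ[k] H ⊗[k] Z)
    (hZcounit : ∀ z : Z, (TensorProduct.lid k Z)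
        ((LinearMap.rTensor Z (Coalgebra.counit (R := k))) (lamZ z)) = z)
    (hZcoassoc : (LinearMap.rTensor Z (Coalgebra.comul (R := k))) ∘ₗ lamZ
        = (TensorProduct.assoc k H H Z).symm.toLinearMap ∘ₗ
          (LinearMap.lTensor H lamZ) ∘ₗ lamZ)
    (hZyd : ydLa k H Z (actT k H Z) lamZ = ydRa k H Z (actT k H Z) lamZ)
    -- w satisfies the cotensor condition
    (w : A ⊗[k] Z)
    (hw : (TensorProduct.assoc k A H Z)
          ((LinearMap.rTensor Z (chiPlusA k H A R1 R2 lamA)) w)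
        = (LinearMap.lTensor A (chiMinusZ k H Z R1 R2 lamZ)) w) :
    ∀ a : A, aeAct k H A Z R1 R2 Sinv lamZ (((1 : A) ⊗ₜ[k] a) ⊗ₜ[k] w)
      = (LinearMap.rTensor Z (LinearMap.mulLeft k a)) w := by
  intro a
  rw [lemA k H A Z R1 R2 Sinv hS1 hS2 lamZ a w, ← hw,
    lemB k H A Z R1 R2 hqt Sinv hS1 hS2 lamA hAcounit hAcoassoc hqc a w]

end AeAction

end
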